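/- For all real numbers z₁, z₂ and l with 0 ≤ z₁ ≤ l, 0 ≤ z₂ ≤ l and 0 < l, one has ( z₁/(l + √(l² − z₁²)) )^l · ( z₂/(l + √(l² − z₂²)) )^l · exp( √(l² − z₁²) + √(l² − z₂²) ) ≤ ( e²·z₁·z₂/(4l²) )^l, where e = exp 1. -/

import Mathlib

lemma debye_aux_exp (t : ℝ) (ht0 : 0 ≤ t) (ht1 : t ≤ 1) :
    Real.exp (t - 1) ≤ (1 + t) / 2 := by
  have h1 : 2 - t ≤ Real.exp (1 - t) := by
    have := Real.add_one_le_exp (1 - t); linarith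
  have h2 : (0:ℝ) < 2 - t := by linarith
  have h3 : Real.exp (t - 1) * (2 - t) ≤ 1 := by
    calc Real.exp (t - 1) * (2 - t) ≤ Real.exp (t - 1) * Real.exp (1 - t) :=
          mul_le_mul_of_nonneg_left h1 (Real.exp_pos _).le
      _ = 1 := by rw [← Real.exp_add]; norm_num
  nlinarith [Real.exp_pos (t - 1)]

lemma debye_factor (z l : ℝ) (hz : 0 ≤ z) (hzl : z ≤ l) (hl : 0 < l) :
    (z / (l + Real.sqrt (l ^ 2 - z ^ 2))) ^ l * Real.exp (Real.sqrt (l ^ 2 - z ^ 2))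
      ≤ (Real.exp 1 * z / (2 * l)) ^ l := by
  set S := Real.sqrt (l ^ 2 - z ^ 2) with hS
  have hS0 : 0 ≤ S := Real.sqrt_nonneg _
  have hSl : S ≤ l := by
    rw [hS]
    calc Real.sqrt (l ^ 2 - z ^ 2) ≤ Real.sqrt (l ^ 2) :=
          Real.sqrt_le_sqrt (by nlinarith)
      _ = l := by rw [Real.sqrt_sq hl.le]
  have hlS : 0 < l + S := by linarith
  have key : z / (l + S) * Real.exp (S / l) ≤ Real.exp 1 * z / (2 * l) := by
    have ht0 : 0 ≤ S / l := div_nonneg hS0 hl.le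
    have ht1 : S / l ≤ 1 := (div_le_one hl).mpr hSl
    have h := debye_aux_exp (S / l) ht0 ht1
    have hx : Real.exp (S / l) ≤ Real.exp 1 * (1 + S / l) / 2 := by
      have he : Real.exp (S / l) = Real.exp 1 * Real.exp (S / l - 1) := by
        rw [← Real.exp_add]; ring_nf
      rw [he]
      calc Real.exp 1 * Real.exp (S / l - 1) ≤ Real.exp 1 * ((1 + S / l) / 2) :=
            mul_le_mul_of_nonneg_left h (Real.exp_pos 1).le
        _ = _ := by ring
    calc z / (l + S) * Real.exp (S / l) ≤ z / (l + S) * (Real.exp 1 * (1 + S / l) / 2) :=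
          mul_le_mul_of_nonneg_left hx (by positivity)
      _ = Real.exp 1 * z / (2 * l) := by field_simp
  have h1 : (z / (l + S)) ^ l * Real.exp S = (z / (l + S) * Real.exp (S / l)) ^ l := by
    rw [Real.mul_rpow (by positivity) (Real.exp_pos _).le]
    congr 1
    rw [← Real.exp_mul]
    congr 1
    field_simp
  rw [h1]
  exact Real.rpow_le_rpow (by positivity) key hl.le

/-- Two-factor relaxation of the Debye-type bound:
`(z₁/(l+√(l²−z₁²)))^l (z₂/(l+√(l²−z₂²)))^l e^{√(l²−z₁²)+√(l²−z₂²)} ≤ (e² z₁ z₂/(4l²))^l`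
for `0 ≤ z₁ ≤ l`, `0 ≤ z₂ ≤ l`, `0 < l` (real exponent: `x ^ l` is `Real.rpow`). -/
theorem debye_relaxation_two_factor (z₁ z₂ l : ℝ)
    (hz₁ : 0 ≤ z₁) (hz₁l : z₁ ≤ l) (hz₂ : 0 ≤ z₂) (hz₂l : z₂ ≤ l) (hl : 0 < l) :
    (z₁ / (l + Real.sqrt (l ^ 2 - z₁ ^ 2))) ^ l *
        (z₂ / (l + Real.sqrt (l ^ 2 - z₂ ^ 2))) ^ l *
        Real.exp (Real.sqrt (l ^ 2 - z₁ ^ 2) + Real.sqrt (l ^ 2 - z₂ ^ 2)) ≤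
      (Real.exp 1 ^ 2 * z₁ * z₂ / (4 * l ^ 2)) ^ l := by
  have hS₁ : 0 ≤ Real.sqrt (l ^ 2 - z₁ ^ 2) := Real.sqrt_nonneg _
  have hS₂ : 0 ≤ Real.sqrt (l ^ 2 - z₂ ^ 2) := Real.sqrt_nonneg _
  have hrhs : (Real.exp 1 ^ 2 * z₁ * z₂ / (4 * l ^ 2)) ^ l
      = (Real.exp 1 * z₁ / (2 * l)) ^ l * (Real.exp 1 * z₂ / (2 * l)) ^ l := by
    rw [← Real.mul_rpow (by positivity) (by positivity)]
    congr 1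
    field_simp
    ring
  rw [hrhs, Real.exp_add]
  calc (z₁ / (l + Real.sqrt (l ^ 2 - z₁ ^ 2))) ^ l *
        (z₂ / (l + Real.sqrt (l ^ 2 - z₂ ^ 2))) ^ l *
        (Real.exp (Real.sqrt (l ^ 2 - z₁ ^ 2)) * Real.exp (Real.sqrt (l ^ 2 - z₂ ^ 2)))
      = ((z₁ / (l + Real.sqrt (l ^ 2 - z₁ ^ 2))) ^ l * Real.exp (Real.sqrt (l ^ 2 - z₁ ^ 2))) *
        ((z₂ / (l + Real.sqrt (l ^ 2 - z₂ ^ 2))) ^ l * Real.exp (Real.sqrt (l ^ 2 - z₂ ^ 2))) := by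
        ring
    _ ≤ (Real.exp 1 * z₁ / (2 * l)) ^ l * (Real.exp 1 * z₂ / (2 * l)) ^ l := by
        apply mul_le_mul (debye_factor z₁ l hz₁ hz₁l hl) (debye_factor z₂ l hz₂ hz₂l hl)
        · positivity
        · positivity
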